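/- Let S ⊆ {1,…,p} be nonempty and let θ*_S ∈ ℝ^{|S|} satisfy the score equation ∑_{i=1}^n (b'(x_iᵀθ₀) − b'(x_{i,S}ᵀθ*_S))·x_{i,S} = 0, and suppose the matrix F = ∑_{i=1}^n b''(x_{i,S}ᵀθ*_S)·x_{i,S}x_{i,S}ᵀ is positive definite. Put V = ∑_{i=1}^n b''(x_iᵀθ₀)·x_{i,S}x_{i,S}ᵀ, Δ = λ_max(F^{−1/2} V F^{−1/2}), ζ = max_{1≤i≤n} ‖F^{−1/2} x_{i,S}‖₂, and ξ = F^{−1/2} ∑_{i=1}^n ε_i·x_{i,S}. If ω > 0 satisfies √2·ω·ζ ≤ (1/2)·√(C_dev·Δ), then for every u ∈ ℝ^{|S|} with ‖u‖₂ = 1 one has P(uᵀξ > √(2·C_dev·Δ·ω²)) ≤ exp(−ω²). -/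

import Mathlib

open MeasureTheory ProbabilityTheory Matrix Real

/-- Largest eigenvalue of a symmetric real matrix, as the supremum of the Rayleigh quotient
over unit vectors. -/
noncomputable def lamMax {m : Type*} [Fintype m] (A : Matrix m m ℝ) : ℝ :=
  sSup {r : ℝ | ∃ u : m → ℝ, (∑ i, u i ^ 2) = 1 ∧ r = u ⬝ᵥ A.mulVec u}

lemma taylor_aux (b : ℝ → ℝ) (hb2 : ContDiff ℝ 2 b) (C s : ℝ)
    (hC : ∀ t : ℝ, |t| ≤ 1/2 → deriv (deriv b) (s + t) ≤ C * deriv (deriv b) s)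
    (h : ℝ) (hh : |h| ≤ 1/2) :
    b (s + h) - b s - h * deriv b s ≤ C * deriv (deriv b) s * h ^ 2 / 2 := by
  have hdb : Differentiable ℝ b := hb2.differentiable (by norm_num)
  have hb1 : ContDiff ℝ 1 (deriv b) := by
    have h2 : ContDiff ℝ (1 + 1 : ℕ) b := by exact_mod_cast hb2
    exact (contDiff_succ_iff_deriv.mp h2).2.2
  have hdb' : Differentiable ℝ (deriv b) := hb1.differentiable (by norm_num)
  set K := C * deriv (deriv b) s with hK
  set g : ℝ → ℝ := fun u => b (s + u) - b s - u * deriv b s - K * u ^ 2 / 2 with hg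
  set g' : ℝ → ℝ := fun u => deriv b (s + u) - deriv b s - K * u with hg'
  have hcomp : ∀ (f : ℝ → ℝ) (hf : Differentiable ℝ f) (u : ℝ),
      HasDerivAt (fun u => f (s + u)) (deriv f (s + u)) u := by
    intro f hf u
    have h1 := (hf (s + u)).hasDerivAt
    have h2 : HasDerivAt (fun u : ℝ => s + u) 1 u := (hasDerivAt_id u).const_add s
    exact (h1.comp u h2).congr_deriv (mul_one _)
  have hgderiv : ∀ u, HasDerivAt g (g' u) u := by
    intro u
    have h1 := hcomp b hdb u
    have h2 : HasDerivAt (fun u : ℝ => u * deriv b s) (deriv b s) u := by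
      simpa using (hasDerivAt_id u).mul_const (deriv b s)
    have h3 : HasDerivAt (fun u : ℝ => K * u ^ 2 / 2) (K * u) u := by
      have := ((hasDerivAt_pow 2 u).const_mul K).div_const 2
      exact this.congr_deriv (by ring)
    exact ((h1.sub_const (b s)).sub h2).sub h3
  have hg'deriv : ∀ u, HasDerivAt g' (deriv (deriv b) (s + u) - K) u := by
    intro u
    have h1 := hcomp (deriv b) hdb' u
    have h2 : HasDerivAt (fun u : ℝ => K * u) K u := by
      simpa using (hasDerivAt_id u).const_mul K
    exact (h1.sub_const (deriv b s)).sub h2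
  have hg'cont : Continuous g' := by
    have : Differentiable ℝ g' := fun u => (hg'deriv u).differentiableAt
    exact this.continuous
  have hgcont : Continuous g := by
    have : Differentiable ℝ g := fun u => (hgderiv u).differentiableAt
    exact this.continuous
  have hg'0 : g' 0 = 0 := by simp [hg']
  have hant : AntitoneOn g' (Set.Icc (-(1/2) : ℝ) (1/2)) := by
    apply antitoneOn_of_deriv_nonpos (convex_Icc _ _) hg'cont.continuousOn
      (fun u _ => (hg'deriv u).differentiableAt.differentiableWithinAt)
    intro u hu
    rw [interior_Icc] at hu
    rw [(hg'deriv u).deriv]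
    have habs : |u| ≤ 1/2 := abs_le.mpr ⟨hu.1.le, hu.2.le⟩
    have := hC u habs
    simp only [hK]
    linarith
  have hg0 : g 0 = 0 := by simp [hg]
  have key : g h ≤ 0 := by
    rcases le_or_gt 0 h with hpos | hneg
    · have hhle : h ≤ 1/2 := le_trans (le_abs_self h) hh
      have hga : AntitoneOn g (Set.Icc (0:ℝ) (1/2)) := by
        apply antitoneOn_of_deriv_nonpos (convex_Icc _ _) hgcont.continuousOn
          (fun u _ => (hgderiv u).differentiableAt.differentiableWithinAt)
        intro u hu
        rw [interior_Icc] at hu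
        rw [(hgderiv u).deriv]
        have h0mem : (0:ℝ) ∈ Set.Icc (-(1/2):ℝ) (1/2) := by norm_num
        have humem : u ∈ Set.Icc (-(1/2):ℝ) (1/2) :=
          ⟨by linarith [hu.1], hu.2.le⟩
        have := hant h0mem humem hu.1.le
        rw [hg'0] at this
        exact this
      have := hga (Set.left_mem_Icc.mpr (by norm_num)) ⟨hpos, hhle⟩ hpos
      rw [hg0] at this
      exact this
    · have hhge : -(1/2) ≤ h := by
        have := neg_abs_le h
        linarith
      have hgm : MonotoneOn g (Set.Icc (-(1/2):ℝ) 0) := by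
        apply monotoneOn_of_deriv_nonneg (convex_Icc _ _) hgcont.continuousOn
          (fun u _ => (hgderiv u).differentiableAt.differentiableWithinAt)
        intro u hu
        rw [interior_Icc] at hu
        rw [(hgderiv u).deriv]
        have h0mem : (0:ℝ) ∈ Set.Icc (-(1/2):ℝ) (1/2) := by norm_num
        have humem : u ∈ Set.Icc (-(1/2):ℝ) (1/2) :=
          ⟨hu.1.le, by linarith [hu.2]⟩
        have := hant humem h0mem hu.2.le
        rw [hg'0] at this
        exact this
      have := hgm ⟨hhge, hneg.le⟩ (Set.right_mem_Icc.mpr (by norm_num)) hneg.le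
      rw [hg0] at this
      exact this
  have : b (s + h) - b s - h * deriv b s - K * h ^ 2 / 2 ≤ 0 := key
  linarith

lemma le_lamMax_aux {m : Type*} [Fintype m] (A : Matrix m m ℝ) (u : m → ℝ)
    (hu : (∑ i, u i ^ 2) = 1) : u ⬝ᵥ A.mulVec u ≤ lamMax A := by
  refine le_csSup ?_ ⟨u, hu, rfl⟩
  refine ⟨∑ j, ∑ k, |A j k|, ?_⟩
  rintro r ⟨w, hw, rfl⟩
  have hwb : ∀ j, |w j| ≤ 1 := by
    intro j
    have h1 : w j ^ 2 ≤ 1 := by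
      rw [← hw]
      exact Finset.single_le_sum (f := fun j => w j ^ 2) (fun _ _ => sq_nonneg _)
        (Finset.mem_univ j)
    nlinarith [abs_nonneg (w j), sq_abs (w j)]
  calc w ⬝ᵥ A.mulVec w = ∑ j, ∑ k, w j * (A j k * w k) := by
        simp [dotProduct, Matrix.mulVec, Finset.mul_sum]
    _ ≤ ∑ j, ∑ k, |A j k| := by
        apply Finset.sum_le_sum; intro j _
        apply Finset.sum_le_sum; intro k _
        calc w j * (A j k * w k) ≤ |w j * (A j k * w k)| := le_abs_self _
          _ = |w j| * |A j k| * |w k| := by rw [abs_mul, abs_mul]; ring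
          _ ≤ 1 * |A j k| * 1 := by
              have ha := abs_nonneg (A j k)
              have h1 := hwb j; have h2 := hwb k
              have h3 := abs_nonneg (w j); have h4 := abs_nonneg (w k)
              nlinarith [mul_le_mul h1 h2 h4 (by norm_num : (0:ℝ) ≤ 1)]
          _ = |A j k| := by ring


/-- deviation of the normalized score function in a GLM with fixed design.
Here `R` plays the role of `F^{-1/2}`: it is the unique positive semidefinite matrix with
`R * F * R = 1`. -/
theorem stmt_1
    {Ω : Type*} [MeasurableSpace Ω] (μ : Measure Ω) [IsProbabilityMeasure μ]
    (n p : ℕ) (hn : 1 ≤ n)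
    (x : Fin n → Fin p → ℝ) (θ₀ : Fin p → ℝ)
    -- the cumulant function
    (b : ℝ → ℝ) (hb2 : ContDiff ℝ 2 b) (hbconv : StrictConvexOn ℝ Set.univ b)
    (Cdev : ℝ) (hCdev : 1 ≤ Cdev)
    (hdev : ∀ s t : ℝ, |t| ≤ 1 / 2 → deriv (deriv b) (s + t) ≤ Cdev * deriv (deriv b) s)
    -- the responses: independent, with the exponential-family moment generating function
    (Y : Fin n → Ω → ℝ) (hYmeas : ∀ i, Measurable (Y i))
    (hYindep : iIndepFun Y μ)
    (hmgf : ∀ i : Fin n, ∀ t : ℝ, ∫ ω, Real.exp (t * Y i ω) ∂μ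
        = Real.exp (b ((∑ j, x i j * θ₀ j) + t) - b (∑ j, x i j * θ₀ j)))
    -- the model `S`, the best coefficient `θs = θ*_S` solving the score equation
    (S : Finset (Fin p)) (hS : S.Nonempty)
    (θs : S → ℝ)
    (hscore : ∀ k : S, ∑ i,
        (deriv b (∑ j, x i j * θ₀ j) - deriv b (∑ j : S, x i j.1 * θs j)) * x i k.1 = 0)
    -- the Fisher matrix `F` and the matrix `V`
    (F V : Matrix S S ℝ)
    (hF : ∀ j k : S, F j k = ∑ i, deriv (deriv b) (∑ l : S, x i l.1 * θs l) * x i j.1 * x i k.1)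
    (hV : ∀ j k : S, V j k = ∑ i, deriv (deriv b) (∑ l, x i l * θ₀ l) * x i j.1 * x i k.1)
    (hFpd : F.PosDef)
    -- `R = F^{-1/2}`
    (R : Matrix S S ℝ) (hRpsd : R.PosSemidef) (hR : R * F * R = 1)
    -- `Δ = λ_max (F^{-1/2} V F^{-1/2})`, `ζ = max_i ‖F^{-1/2} x_{i,S}‖₂`
    (Δ ζ ω : ℝ)
    (hΔ : Δ = lamMax (R * V * R))
    (hζ : ζ = ⨆ i : Fin n, Real.sqrt (∑ j : S, (R.mulVec (fun l : S => x i l.1) j) ^ 2))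
    (hω : 0 < ω)
    (hcond : Real.sqrt 2 * ω * ζ ≤ (1 / 2) * Real.sqrt (Cdev * Δ)) :
    ∀ u : S → ℝ, (∑ j, u j ^ 2) = 1 →
      μ {ωs | Real.sqrt (2 * Cdev * Δ * ω ^ 2)
          < ∑ j : S, u j * R.mulVec
              (fun k : S => ∑ i, (Y i ωs - deriv b (∑ l, x i l * θ₀ l)) * x i k.1) j}
        ≤ ENNReal.ofReal (Real.exp (-ω ^ 2)) := by
  intro u hu
  classical
  have hCpos : (0:ℝ) < Cdev := lt_of_lt_of_le one_pos hCdev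
  obtain ⟨k0, hk0⟩ := hS
  -- local definitions
  obtain ⟨c, hcdef⟩ : ∃ c : Fin n → ℝ,
      ∀ i, c i = ∑ j : S, u j * R.mulVec (fun l : S => x i l.1) j := ⟨_, fun i => rfl⟩
  obtain ⟨X, hXdef⟩ : ∃ X : Fin n → Ω → ℝ,
      ∀ i ωs, X i ωs = c i * (Y i ωs - deriv b (∑ l, x i l * θ₀ l)) := ⟨_, fun i ωs => rfl⟩
  -- symmetry of R
  have hRsym : Rᵀ = R := by
    ext j k
    have h2 := congrFun (congrFun hRpsd.1 j) k
    simp only [Matrix.conjTranspose_apply, star_trivial] at h2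
    simpa [Matrix.transpose_apply] using h2
  have hRsymE : ∀ j k, R j k = R k j := by
    intro j k
    have h3 := congrFun (congrFun hRsym k) j
    simpa [Matrix.transpose_apply] using h3
  -- invertibility of R
  have hFRR : (F * R) * R = 1 := by
    rw [mul_eq_one_comm]
    calc R * (F * R) = R * F * R := by rw [Matrix.mul_assoc]
      _ = 1 := hR
  have hRinj : ∀ w : S → ℝ, R.mulVec w = 0 → w = 0 := by
    intro w hw
    have h1 : (F * R) *ᵥ (R *ᵥ w) = ((F * R) * R) *ᵥ w := Matrix.mulVec_mulVec w (F*R) R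
    rw [hw, Matrix.mulVec_zero, hFRR, Matrix.one_mulVec] at h1
    exact h1.symm
  -- norms bounded by ζ
  have hnorm_le : ∀ i : Fin n,
      Real.sqrt (∑ j : S, (R.mulVec (fun l : S => x i l.1) j) ^ 2) ≤ ζ := by
    intro i
    rw [hζ]
    exact le_ciSup (f := fun i : Fin n =>
      Real.sqrt (∑ j : S, (R.mulVec (fun l : S => x i l.1) j) ^ 2))
      (Set.Finite.bddAbove (Set.finite_range _)) i
  have hζnn : (0:ℝ) ≤ ζ := le_trans (Real.sqrt_nonneg _) (hnorm_le ⟨0, hn⟩)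
  -- positivity of Cdev * Δ
  have hCΔ : 0 < Cdev * Δ := by
    by_contra hcon
    push_neg at hcon
    have hsq0 : Real.sqrt (Cdev * Δ) = 0 := Real.sqrt_eq_zero'.mpr hcon
    have hζ0 : ζ ≤ 0 := by
      have h2 : 0 < Real.sqrt 2 * ω := by positivity
      rw [hsq0] at hcond
      nlinarith
    have hx0 : ∀ (i : Fin n) (l : S), x i l.1 = 0 := by
      intro i l
      have h1 : Real.sqrt (∑ j : S, (R.mulVec (fun l : S => x i l.1) j) ^ 2) ≤ 0 :=
        le_trans (hnorm_le i) hζ0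
      have h4 : Real.sqrt (∑ j : S, (R.mulVec (fun l : S => x i l.1) j) ^ 2) = 0 :=
        le_antisymm h1 (Real.sqrt_nonneg _)
      have h5 := Real.sqrt_eq_zero'.mp h4
      have h6 : (0:ℝ) ≤ ∑ j : S, (R.mulVec (fun l : S => x i l.1) j) ^ 2 :=
        Finset.sum_nonneg fun _ _ => sq_nonneg _
      have h2 : (∑ j : S, (R.mulVec (fun l : S => x i l.1) j) ^ 2) = 0 := le_antisymm h5 h6
      have h7 : R.mulVec (fun l : S => x i l.1) = 0 := by
        funext j
        have h8 := (Finset.sum_eq_zero_iff_of_nonneg (fun _ _ => sq_nonneg _)).mp h2 j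
          (Finset.mem_univ j)
        exact pow_eq_zero_iff (by norm_num) |>.mp h8
      have h9 := hRinj _ h7
      exact congrFun h9 l
    have hF0 : F = 0 := by
      ext j k
      rw [hF j k]
      simp only [Matrix.zero_apply]
      exact Finset.sum_eq_zero fun i _ => by rw [hx0 i j]; ring
    have hzne : (fun _ : S => (1:ℝ)) ≠ 0 := by
      intro h
      have := congrFun h ⟨k0, hk0⟩
      norm_num at this
    have := hFpd.dotProduct_mulVec_pos hzne
    rw [hF0] at this
    simp [Matrix.zero_mulVec] at this
  have hΔpos : 0 < Δ := by nlinarith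
  have hsqCΔ : 0 < Real.sqrt (Cdev * Δ) := Real.sqrt_pos.mpr hCΔ
  -- the Chernoff parameter
  obtain ⟨t, htdef⟩ : ∃ t : ℝ, t = Real.sqrt 2 * ω / Real.sqrt (Cdev * Δ) := ⟨_, rfl⟩
  have ht0 : 0 < t := by
    rw [htdef]
    positivity
  -- |c i| ≤ ζ
  have hci : ∀ i, |c i| ≤ ζ := by
    intro i
    refine le_trans (Real.abs_le_sqrt ?_) (hnorm_le i)
    have h1 := Finset.sum_mul_sq_le_sq_mul_sq Finset.univ u
      (fun j => R.mulVec (fun l : S => x i l.1) j)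
    rw [hcdef]
    calc (∑ j : S, u j * R.mulVec (fun l : S => x i l.1) j) ^ 2
        ≤ (∑ j, u j ^ 2) * ∑ j : S, (R.mulVec (fun l : S => x i l.1) j) ^ 2 := h1
      _ = ∑ j : S, (R.mulVec (fun l : S => x i l.1) j) ^ 2 := by rw [hu, one_mul]
  -- t * ζ ≤ 1/2 and |t * c i| ≤ 1/2
  have htζ : t * ζ ≤ 1/2 := by
    have heq : t * ζ = Real.sqrt 2 * ω * ζ / Real.sqrt (Cdev * Δ) := by rw [htdef]; ring
    rw [heq, div_le_iff₀ hsqCΔ]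
    exact hcond
  have htc : ∀ i, |t * c i| ≤ 1/2 := by
    intro i
    rw [abs_mul, abs_of_pos ht0]
    calc t * |c i| ≤ t * ζ := mul_le_mul_of_nonneg_left (hci i) ht0.le
      _ ≤ 1/2 := htζ
  -- integrability
  have hYint : ∀ (i : Fin n) (r : ℝ), Integrable (fun ωs => Real.exp (r * Y i ωs)) μ := by
    intro i r
    by_contra hint
    have h0 := integral_undef hint
    rw [hmgf i r] at h0
    exact (Real.exp_pos _).ne' h0
  have hXint : ∀ i, Integrable (fun ωs => Real.exp (t * X i ωs)) μ := by
    intro i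
    have heq : (fun ωs => Real.exp (t * X i ωs))
        = fun ωs => Real.exp (-(t * c i * deriv b (∑ l, x i l * θ₀ l)))
            * Real.exp ((t * c i) * Y i ωs) := by
      funext ωs
      rw [← Real.exp_add, hXdef]
      congr 1
      ring
    rw [heq]
    exact (hYint i (t * c i)).const_mul _
  have hXmeas : ∀ i, Measurable (X i) := by
    intro i
    have heq : X i = fun ωs => c i * (Y i ωs - deriv b (∑ l, x i l * θ₀ l)) :=
      funext fun ωs => hXdef i ωs
    rw [heq]
    exact ((hYmeas i).sub_const _).const_mul _
  have hXindep : iIndepFun X μ := by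
    have h1 := hYindep.comp (fun i y => c i * (y - deriv b (∑ l, x i l * θ₀ l)))
      (fun i => (measurable_id.sub_const _).const_mul _)
    have hXeq : X = fun i => (fun y => c i * (y - deriv b (∑ l, x i l * θ₀ l))) ∘ Y i :=
      funext fun i => funext fun ωs => hXdef i ωs
    rw [hXeq]
    exact h1
  -- mgf of each X i
  have hmgfX : ∀ i, mgf (X i) μ t
      = Real.exp (b ((∑ l, x i l * θ₀ l) + t * c i) - b (∑ l, x i l * θ₀ l)
          - t * c i * deriv b (∑ l, x i l * θ₀ l)) := by
    intro i
    have h1 : mgf (X i) μ t = ∫ ωs, Real.exp (t * X i ωs) ∂μ := rfl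
    have heq : (fun ωs => Real.exp (t * X i ωs))
        = fun ωs => Real.exp (-(t * c i * deriv b (∑ l, x i l * θ₀ l)))
            * Real.exp ((t * c i) * Y i ωs) := by
      funext ωs
      rw [← Real.exp_add, hXdef]
      congr 1
      ring
    rw [h1, heq, MeasureTheory.integral_const_mul, hmgf i (t * c i), ← Real.exp_add]
    congr 1
    ring
  -- Taylor bound on each exponent
  have hexp_bound : ∀ i, b ((∑ l, x i l * θ₀ l) + t * c i) - b (∑ l, x i l * θ₀ l)
      - t * c i * deriv b (∑ l, x i l * θ₀ l)
      ≤ Cdev * deriv (deriv b) (∑ l, x i l * θ₀ l) * (t * c i) ^ 2 / 2 := by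
    intro i
    have h1 := taylor_aux b hb2 Cdev (∑ l, x i l * θ₀ l)
      (fun r hr => hdev _ r hr) (t * c i) (htc i)
    linarith
  -- the quadratic-form identity
  have hcalt : ∀ i, c i = ∑ k : S, (R.mulVec u) k * x i k.1 := by
    intro i
    rw [hcdef]
    simp only [Matrix.mulVec, dotProduct, Finset.mul_sum, Finset.sum_mul]
    rw [Finset.sum_comm]
    refine Finset.sum_congr rfl fun k _ => Finset.sum_congr rfl fun j _ => ?_
    rw [hRsymE j k]
    ring
  have hquad : (∑ i, deriv (deriv b) (∑ l, x i l * θ₀ l) * c i ^ 2)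
      = u ⬝ᵥ (R * V * R).mulVec u := by
    have h1 : R.mulVec (V.mulVec (R.mulVec u)) = (R * V * R).mulVec u := by
      rw [Matrix.mulVec_mulVec, Matrix.mulVec_mulVec]
    have h2 : u ⬝ᵥ (R * V * R).mulVec u = (R.mulVec u) ⬝ᵥ (V.mulVec (R.mulVec u)) := by
      rw [← h1, Matrix.dotProduct_mulVec]
      congr 1
      conv_lhs => rw [← hRsym]
      rw [Matrix.vecMul_transpose]
    rw [h2]
    set w : S → ℝ := R.mulVec u with hw
    calc (∑ i, deriv (deriv b) (∑ l, x i l * θ₀ l) * c i ^ 2)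
        = ∑ i, ∑ a : S, ∑ e : S, w a * ((deriv (deriv b) (∑ l, x i l * θ₀ l)
            * x i a.1 * x i e.1) * w e) := by
          refine Finset.sum_congr rfl fun i _ => ?_
          rw [hcalt i, sq, Finset.sum_mul_sum]
          simp only [Finset.mul_sum]
          refine Finset.sum_congr rfl fun a _ => Finset.sum_congr rfl fun e _ => ?_
          ring
      _ = ∑ a : S, ∑ i, ∑ e : S, w a * ((deriv (deriv b) (∑ l, x i l * θ₀ l)
            * x i a.1 * x i e.1) * w e) := Finset.sum_comm
      _ = ∑ a : S, ∑ e : S, ∑ i, w a * ((deriv (deriv b) (∑ l, x i l * θ₀ l)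
            * x i a.1 * x i e.1) * w e) := Finset.sum_congr rfl fun a _ => Finset.sum_comm
      _ = w ⬝ᵥ V.mulVec w := by
          simp only [dotProduct, Matrix.mulVec, hV, Finset.mul_sum, Finset.sum_mul]
  have hray : u ⬝ᵥ (R * V * R).mulVec u ≤ Δ := by
    rw [hΔ]
    exact le_lamMax_aux _ u hu
  -- arithmetic with t
  have ht2 : t ^ 2 * (Cdev * Δ) = 2 * ω ^ 2 := by
    rw [htdef, div_pow, mul_pow, Real.sq_sqrt (by norm_num : (0:ℝ) ≤ 2),
      Real.sq_sqrt hCΔ.le]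
    field_simp
  have hfac : Real.sqrt (2 * Cdev * Δ * ω ^ 2)
      = Real.sqrt 2 * Real.sqrt (Cdev * Δ) * ω := by
    rw [show 2 * Cdev * Δ * ω ^ 2 = (Real.sqrt 2 * Real.sqrt (Cdev * Δ) * ω) ^ 2 by
      rw [mul_pow, mul_pow, Real.sq_sqrt (by norm_num : (0:ℝ) ≤ 2), Real.sq_sqrt hCΔ.le]
      ring]
    exact Real.sqrt_sq (by positivity)
  have hta : t * Real.sqrt (2 * Cdev * Δ * ω ^ 2) = 2 * ω ^ 2 := by
    rw [hfac, htdef]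
    have h2 : Real.sqrt 2 * Real.sqrt 2 = 2 := Real.mul_self_sqrt (by norm_num)
    calc Real.sqrt 2 * ω / Real.sqrt (Cdev * Δ) * (Real.sqrt 2 * Real.sqrt (Cdev * Δ) * ω)
        = Real.sqrt 2 * Real.sqrt 2 * ω ^ 2
          * (Real.sqrt (Cdev * Δ) / Real.sqrt (Cdev * Δ)) := by ring
      _ = 2 * ω ^ 2 * 1 := by rw [h2, div_self hsqCΔ.ne']
      _ = 2 * ω ^ 2 := by ring
  -- the mgf bound
  have hint_sum : Integrable (fun ωs => Real.exp (t * (∑ i, X i) ωs)) μ :=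
    hXindep.integrable_exp_mul_sum hXmeas (fun i _ => hXint i)
  have hmgfsum : mgf (∑ i, X i) μ t ≤ Real.exp (ω ^ 2) := by
    rw [hXindep.mgf_sum hXmeas]
    calc (∏ i, mgf (X i) μ t)
        = Real.exp (∑ i, (b ((∑ l, x i l * θ₀ l) + t * c i) - b (∑ l, x i l * θ₀ l)
            - t * c i * deriv b (∑ l, x i l * θ₀ l))) := by
          rw [Real.exp_sum]
          exact Finset.prod_congr rfl fun i _ => hmgfX i
      _ ≤ Real.exp (ω ^ 2) := by
          apply Real.exp_le_exp.mpr
          calc (∑ i, (b ((∑ l, x i l * θ₀ l) + t * c i) - b (∑ l, x i l * θ₀ l)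
                - t * c i * deriv b (∑ l, x i l * θ₀ l)))
              ≤ ∑ i, Cdev * deriv (deriv b) (∑ l, x i l * θ₀ l) * (t * c i) ^ 2 / 2 :=
                Finset.sum_le_sum fun i _ => hexp_bound i
            _ = t ^ 2 / 2 * Cdev * ∑ i, deriv (deriv b) (∑ l, x i l * θ₀ l) * c i ^ 2 := by
                rw [Finset.mul_sum]
                exact Finset.sum_congr rfl fun i _ => by ring
            _ = t ^ 2 / 2 * Cdev * (u ⬝ᵥ (R * V * R).mulVec u) := by rw [hquad]
            _ ≤ t ^ 2 / 2 * Cdev * Δ := by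
                apply mul_le_mul_of_nonneg_left hray (by positivity)
            _ = ω ^ 2 := by
                have h3 : t ^ 2 / 2 * Cdev * Δ = t ^ 2 * (Cdev * Δ) / 2 := by ring
                rw [h3, ht2]
                ring
  -- event identity
  have hevent : ∀ ωs, (∑ j : S, u j * R.mulVec
      (fun k : S => ∑ i, (Y i ωs - deriv b (∑ l, x i l * θ₀ l)) * x i k.1) j)
      = ∑ i, X i ωs := by
    intro ωs
    calc (∑ j : S, u j * R.mulVec
          (fun k : S => ∑ i, (Y i ωs - deriv b (∑ l, x i l * θ₀ l)) * x i k.1) j)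
        = ∑ j : S, ∑ k : S, ∑ i, u j * (R j k
            * ((Y i ωs - deriv b (∑ l, x i l * θ₀ l)) * x i k.1)) := by
          simp only [Matrix.mulVec, dotProduct, Finset.mul_sum]
      _ = ∑ j : S, ∑ i, ∑ k : S, u j * (R j k
            * ((Y i ωs - deriv b (∑ l, x i l * θ₀ l)) * x i k.1)) :=
          Finset.sum_congr rfl fun j _ => Finset.sum_comm
      _ = ∑ i, ∑ j : S, ∑ k : S, u j * (R j k
            * ((Y i ωs - deriv b (∑ l, x i l * θ₀ l)) * x i k.1)) := Finset.sum_comm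
      _ = ∑ i, X i ωs := by
          refine Finset.sum_congr rfl fun i _ => ?_
          rw [hXdef, hcdef]
          simp only [Matrix.mulVec, dotProduct, Finset.mul_sum, Finset.sum_mul]
          refine Finset.sum_congr rfl fun j _ => Finset.sum_congr rfl fun k _ => ?_
          ring
  -- Chernoff bound and conclusion
  have hcher := measure_ge_le_exp_mul_mgf (X := ∑ i, X i) (μ := μ)
    (Real.sqrt (2 * Cdev * Δ * ω ^ 2)) ht0.le hint_sum
  have hfinal : Real.exp (-t * Real.sqrt (2 * Cdev * Δ * ω ^ 2)) * mgf (∑ i, X i) μ t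
      ≤ Real.exp (-ω ^ 2) := by
    calc Real.exp (-t * Real.sqrt (2 * Cdev * Δ * ω ^ 2)) * mgf (∑ i, X i) μ t
        ≤ Real.exp (-t * Real.sqrt (2 * Cdev * Δ * ω ^ 2)) * Real.exp (ω ^ 2) :=
          mul_le_mul_of_nonneg_left hmgfsum (Real.exp_pos _).le
      _ = Real.exp (-t * Real.sqrt (2 * Cdev * Δ * ω ^ 2) + ω ^ 2) := (Real.exp_add _ _).symm
      _ = Real.exp (-ω ^ 2) := by
          congr 1
          have := hta
          nlinarith [hta]
  calc μ {ωs | Real.sqrt (2 * Cdev * Δ * ω ^ 2)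
        < ∑ j : S, u j * R.mulVec
            (fun k : S => ∑ i, (Y i ωs - deriv b (∑ l, x i l * θ₀ l)) * x i k.1) j}
      ≤ μ {ωs | Real.sqrt (2 * Cdev * Δ * ω ^ 2) ≤ (∑ i, X i) ωs} := by
        apply measure_mono
        intro ωs hlt
        simp only [Set.mem_setOf_eq] at hlt ⊢
        rw [Finset.sum_apply]
        rw [← hevent ωs]
        exact hlt.le
    _ = ENNReal.ofReal ((μ {ωs | Real.sqrt (2 * Cdev * Δ * ω ^ 2) ≤ (∑ i, X i) ωs}).toReal) :=
        (ENNReal.ofReal_toReal (measure_ne_top μ _)).symm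
    _ ≤ ENNReal.ofReal (Real.exp (-t * Real.sqrt (2 * Cdev * Δ * ω ^ 2))
        * mgf (∑ i, X i) μ t) := ENNReal.ofReal_le_ofReal hcher
    _ ≤ ENNReal.ofReal (Real.exp (-ω ^ 2)) := ENNReal.ofReal_le_ofReal hfinal
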